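/- Let α_1, α_2 ∈ (1,2), let n_1, n_2 ≥ 1 be integers, let c_x, c_y > 0, set N = n_1 n_2, let τ_1(A) = c_x (I_{n_2} ⊗ τ(G_{n_1}^{(α_1)})) + c_y (τ(G_{n_2}^{(α_2)}) ⊗ I_{n_1}), and let D be an N×N diagonal matrix with nonnegative diagonal entries. Then the preconditioner P = I_N - τ_1(A) + D is symmetric positive definite, and in particular P is invertible. -/

import Mathlib

/-- Grünwald–Letnikov coefficients: `g α 0 = 1`,
`g α l = (1 - (α+1)/l) * g α (l-1)` for `l ≥ 1`. -/
noncomputable def g (α : ℝ) : ℕ → ℝ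
  | 0 => 1
  | l + 1 => (1 - (α + 1) / ((l : ℝ) + 1)) * g α l


/-- First column (Toeplitz symbol) of `G_n^{(α)}`: entry at distance `d` is
`2 g₁` if `d = 0`, `g₀ + g₂` if `d = 1`, and `g_{d+1}` if `d ≥ 2`. -/
noncomputable def gSymb (α : ℝ) : ℕ → ℝ
  | 0 => 2 * g α 1
  | 1 => g α 0 + g α 2
  | d + 2 => g α (d + 3)

/-- The symmetric Toeplitz matrix `G_n^{(α)}`. -/
noncomputable def Gmat (α : ℝ) (n : ℕ) : Matrix (Fin n) (Fin n) ℝ :=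
  Matrix.of fun i j => gSymb α (((i : ℤ) - (j : ℤ)).natAbs)

/-- The symmetric Toeplitz matrix `T_n = [t_{|i-j|}]` generated by `t`. -/
noncomputable def toeplitzMat (t : ℕ → ℝ) (n : ℕ) : Matrix (Fin n) (Fin n) ℝ :=
  Matrix.of fun i j => t (((i : ℤ) - (j : ℤ)).natAbs)

/-- The Hankel correction matrix `H_n` (1-based indices `i, j`):
`[H_n]_{ij} = t_{i+j}` for `2 ≤ i+j ≤ n-1`, `0` for `n ≤ i+j ≤ n+2`,
and `t_{2n+2-(i+j)}` for `n+3 ≤ i+j ≤ 2n`. -/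
noncomputable def hankelMat (t : ℕ → ℝ) (n : ℕ) : Matrix (Fin n) (Fin n) ℝ :=
  Matrix.of fun i j =>
    let s := (i : ℕ) + (j : ℕ) + 2
    if s ≤ n - 1 then t s else if s ≤ n + 2 then 0 else t (2 * n + 2 - s)

/-- The τ matrix `τ(T_n) = T_n - H_n`. -/
noncomputable def tauMat (t : ℕ → ℝ) (n : ℕ) : Matrix (Fin n) (Fin n) ℝ :=
  toeplitzMat t n - hankelMat t n

open Matrix Kronecker

/-- `τ₁(A) = c_x (I_{n₂} ⊗ τ(G_{n₁}^{(α₁)})) + c_y (τ(G_{n₂}^{(α₂)}) ⊗ I_{n₁})`. -/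
noncomputable def tau1A (α₁ α₂ : ℝ) (n₁ n₂ : ℕ) (cx cy : ℝ) :
    Matrix (Fin n₂ × Fin n₁) (Fin n₂ × Fin n₁) ℝ :=
  cx • ((1 : Matrix (Fin n₂) (Fin n₂) ℝ) ⊗ₖ tauMat (gSymb α₁) n₁) +
    cy • (tauMat (gSymb α₂) n₂ ⊗ₖ (1 : Matrix (Fin n₁) (Fin n₁) ℝ))

lemma g_zero (α : ℝ) : g α 0 = 1 := rfl

lemma g_succ (α : ℝ) (n : ℕ) : g α (n+1) = (1 - (α+1)/((n:ℝ)+1)) * g α n := rfl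

lemma g_one (α : ℝ) : g α 1 = -α := by
  rw [g_succ α 0, g_zero]
  norm_num

lemma g_shift (α : ℝ) (n : ℕ) : g α (n+1) = -(α/((n:ℝ)+1)) * g (α-1) n := by
  induction n with
  | zero => simp [g_one, g_zero]
  | succ n ih =>
    rw [g_succ, ih, show g (α-1) (n+1) = (1 - ((α-1)+1)/((n:ℝ)+1)) * g (α-1) n from rfl]
    have h1 : (n:ℝ)+1 ≠ 0 := by positivity
    have h2 : (n:ℝ)+1+1 ≠ 0 := by positivity
    push_cast
    field_simp
    ring

lemma sum_g (α : ℝ) (n : ℕ) : ∑ l ∈ Finset.range (n+1), g α l = g (α-1) n := by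
  induction n with
  | zero => simp [g_zero]
  | succ n ih =>
    rw [Finset.sum_range_succ, ih, g_shift,
      show g (α-1) (n+1) = (1 - ((α-1)+1)/((n:ℝ)+1)) * g (α-1) n from rfl]
    ring

lemma g_neg_of {β : ℝ} (h0 : 0 < β) (h1 : β < 1) : ∀ n, 1 ≤ n → g β n < 0 := by
  intro n hn
  induction n with
  | zero => omega
  | succ m ih =>
    rcases Nat.eq_zero_or_pos m with hm | hm
    · subst hm; rw [g_one]; linarith
    · have hgm := ih hm
      rw [g_succ]
      have hml : (1:ℝ) ≤ (m:ℝ) := by exact_mod_cast hm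
      have hf : 0 < 1 - (β+1)/((m:ℝ)+1) := by
        have hlt : (β+1)/((m:ℝ)+1) < 1 := by
          rw [div_lt_one (by linarith)]; linarith
        linarith
      exact mul_neg_of_pos_of_neg hf hgm

lemma g_pos_of {α : ℝ} (h1 : 1 < α) (h2 : α < 2) : ∀ n, 2 ≤ n → 0 < g α n := by
  intro n hn
  induction n with
  | zero => omega
  | succ m ih =>
    rcases Nat.lt_or_ge m 2 with hm | hm
    · have hm1 : m = 1 := by omega
      subst hm1
      rw [g_succ, g_one]
      push_cast
      nlinarith
    · have hgm := ih hm
      rw [g_succ]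
      have hml : (2:ℝ) ≤ (m:ℝ) := by exact_mod_cast hm
      have hf : 0 < 1 - (α+1)/((m:ℝ)+1) := by
        have hlt : (α+1)/((m:ℝ)+1) < 1 := by
          rw [div_lt_one (by linarith)]; linarith
        linarith
      positivity

lemma gSymb_nonneg {α : ℝ} (h1 : 1 < α) (h2 : α < 2) : ∀ d, 1 ≤ d → 0 ≤ gSymb α d := by
  intro d hd
  match d, hd with
  | 1, _ =>
    show 0 ≤ g α 0 + g α 2
    have := g_pos_of h1 h2 2 le_rfl
    rw [g_zero]; linarith
  | (d+2), _ =>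
    show 0 ≤ g α (d+3)
    exact le_of_lt (g_pos_of h1 h2 (d+3) (by omega))

lemma symb_bound {α : ℝ} (h1 : 1 < α) (h2 : α < 2) (n : ℕ) (hn : 1 ≤ n) :
    gSymb α 0 + 2 * ∑ d ∈ Finset.Ico 1 n, gSymb α d ≤ 0 := by
  rcases Nat.eq_or_lt_of_le hn with h | h
  · rw [← h]
    simp [gSymb, g_one]
    linarith
  · -- n ≥ 2
    have hn2 : 2 ≤ n := h
    have key : gSymb α 0 + 2 * ∑ d ∈ Finset.Ico 1 n, gSymb α d = 2 * g (α-1) n := by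
      rw [← sum_g]
      have e1 : ∑ d ∈ Finset.Ico 1 n, gSymb α d
          = gSymb α 1 + ∑ d ∈ Finset.Ico 2 n, gSymb α d := by
        rw [← Finset.sum_Ico_consecutive _ (by omega : 1 ≤ 2) (by omega : 2 ≤ n)]
        congr 1
        simp
      have e2 : ∑ d ∈ Finset.Ico 2 n, gSymb α d = ∑ l ∈ Finset.Ico 3 (n+1), g α l := by
        rw [Finset.sum_Ico_eq_sum_range, Finset.sum_Ico_eq_sum_range,
          show n + 1 - 3 = n - 2 from by omega]
        apply Finset.sum_congr rfl
        intro i _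
        rw [show 2 + i = i + 2 from by omega, show 3 + i = i + 3 from by omega]
        rfl
      have e3 : ∑ l ∈ Finset.range (n+1), g α l
          = (g α 0 + g α 1 + g α 2) + ∑ l ∈ Finset.Ico 3 (n+1), g α l := by
        rw [Finset.range_eq_Ico, ← Finset.sum_Ico_consecutive _ (by omega : 0 ≤ 3) (by omega : 3 ≤ n+1)]
        congr 1
        rw [show Finset.Ico 0 3 = Finset.range 3 from by rw [Finset.range_eq_Ico]]
        rw [Finset.sum_range_succ, Finset.sum_range_succ, Finset.sum_range_one]
      rw [e1, e2, e3]
      show gSymb α 0 + 2 * (gSymb α 1 + _) = _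
      rw [show gSymb α 0 = 2 * g α 1 from rfl, show gSymb α 1 = g α 0 + g α 2 from rfl]
      ring
    rw [key]
    have := g_neg_of (by linarith : (0:ℝ) < α - 1) (by linarith) n (by omega)
    linarith


open Finset

instance instNZ (n : ℕ) : NeZero (2*n+2) := ⟨by omega⟩

/-- index embedding: position `j` (0-based) ↦ `j+1` in `ZMod (2n+2)`. -/
def aIdx (n : ℕ) (j : Fin n) : ZMod (2*n+2) := (((j:ℕ)+1 : ℕ) : ZMod (2*n+2))

/-- Odd periodic extension of `x` to `ZMod (2n+2)`. -/
noncomputable def extOdd {n : ℕ} (x : Fin n → ℝ) (m : ZMod (2*n+2)) : ℝ :=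
  ∑ j : Fin n, ((if m = aIdx n j then x j else 0) - (if m = -aIdx n j then x j else 0))

lemma cast_eq_cast_iff {n a b : ℕ} (ha : a < 2*n+2) (hb : b < 2*n+2) :
    ((a : ZMod (2*n+2)) = (b : ZMod (2*n+2))) ↔ a = b := by
  constructor
  · intro h
    have := congrArg ZMod.val h
    rwa [ZMod.val_cast_of_lt ha, ZMod.val_cast_of_lt hb] at this
  · rintro rfl; rfl

lemma cast_eq_neg_cast_iff {n a b : ℕ} :
    ((a : ZMod (2*n+2)) = -(b : ZMod (2*n+2))) ↔ (2*n+2) ∣ (a+b) := by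
  rw [eq_neg_iff_add_eq_zero, ← Nat.cast_add, ZMod.natCast_eq_zero_iff]

lemma dvd_window {n s : ℕ} (h0 : 0 < s) (h2 : s < 2*(2*n+2)) :
    (2*n+2) ∣ s ↔ s = 2*n+2 := by
  constructor
  · rintro ⟨k, hk⟩
    match k, hk with
    | 0, hk => omega
    | 1, hk => omega
    | (k+2), hk =>
      exfalso
      have h2le : (2*n+2) * 2 ≤ (2*n+2) * (k+2) := Nat.mul_le_mul_left _ (by omega)
      omega
  · rintro rfl; exact ⟨1, by ring⟩

lemma extOdd_apply {n : ℕ} (x : Fin n → ℝ) (j : Fin n) : extOdd x (aIdx n j) = x j := by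
  unfold extOdd
  have h1 : ∀ j' : Fin n,
      ((if aIdx n j = aIdx n j' then x j' else 0) - (if aIdx n j = -aIdx n j' then x j' else 0))
      = if j' = j then x j' else 0 := by
    intro j'
    have hne : ¬ (aIdx n j = -aIdx n j') := by
      rw [aIdx, aIdx, cast_eq_neg_cast_iff]
      intro h
      rw [dvd_window (by omega) (by have := j.isLt; have := j'.isLt; omega)] at h
      have := j.isLt; have := j'.isLt; omega
    rw [if_neg hne, sub_zero, aIdx, aIdx]
    have hiff : ((((j:ℕ)+1 : ℕ) : ZMod (2*n+2)) = (((j':ℕ)+1 : ℕ) : ZMod (2*n+2))) ↔ (j' = j) := by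
      rw [cast_eq_cast_iff (by have := j.isLt; omega) (by have := j'.isLt; omega), Fin.ext_iff]
      omega
    simp only [hiff]
  rw [Finset.sum_congr rfl (fun j' _ => h1 j'), Finset.sum_ite_eq' Finset.univ j x]
  simp

lemma extOdd_neg {n : ℕ} (x : Fin n → ℝ) (m : ZMod (2*n+2)) : extOdd x (-m) = -extOdd x m := by
  unfold extOdd
  rw [← Finset.sum_neg_distrib]
  apply Finset.sum_congr rfl
  intro j _
  rw [if_congr (neg_eq_iff_eq_neg (b := aIdx n j)) rfl rfl, if_congr neg_inj rfl rfl]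
  ring

lemma extOdd_zero {n : ℕ} (x : Fin n → ℝ) : extOdd x 0 = 0 := by
  unfold extOdd
  apply Finset.sum_eq_zero
  intro j _
  have hlt := j.isLt
  have h1 : ¬ ((0 : ZMod (2*n+2)) = aIdx n j) := by
    rw [show (0 : ZMod (2*n+2)) = ((0:ℕ) : ZMod (2*n+2)) from by norm_num, aIdx,
      cast_eq_cast_iff (by omega) (by omega)]
    omega
  have h2 : ¬ ((0 : ZMod (2*n+2)) = -aIdx n j) := by
    rw [show (0 : ZMod (2*n+2)) = ((0:ℕ) : ZMod (2*n+2)) from by norm_num, aIdx,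
      cast_eq_neg_cast_iff, dvd_window (by omega) (by omega)]
    omega
  rw [if_neg h1, if_neg h2, sub_zero]

lemma extOdd_mid {n : ℕ} (x : Fin n → ℝ) : extOdd x ((n+1 : ℕ) : ZMod (2*n+2)) = 0 := by
  unfold extOdd
  apply Finset.sum_eq_zero
  intro j _
  have hlt := j.isLt
  have h1 : ¬ (((n+1:ℕ) : ZMod (2*n+2)) = aIdx n j) := by
    rw [aIdx, cast_eq_cast_iff (by omega) (by omega)]
    omega
  have h2 : ¬ (((n+1:ℕ) : ZMod (2*n+2)) = -aIdx n j) := by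
    rw [aIdx, cast_eq_neg_cast_iff, dvd_window (by omega) (by omega)]
    omega
  rw [if_neg h1, if_neg h2, sub_zero]

/-- Partition of the sum over `ZMod (2n+2)` for even functions vanishing at `0` and `n+1`. -/
lemma sum_zmod_eq {n : ℕ} (G : ZMod (2*n+2) → ℝ) (hG : ∀ m, G (-m) = G m)
    (h0 : G 0 = 0) (hmid : G ((n+1:ℕ) : ZMod (2*n+2)) = 0) :
    ∑ m : ZMod (2*n+2), G m = 2 * ∑ j : Fin n, G (aIdx n j) := by
  classical
  set ψ : Fin n ⊕ (Fin n ⊕ Fin 2) → ZMod (2*n+2) :=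
    Sum.elim (fun j => aIdx n j)
      (Sum.elim (fun j => -aIdx n j)
        (fun k => if k = 0 then 0 else ((n+1:ℕ) : ZMod (2*n+2)))) with hψ
  have hsurj : Function.Surjective ψ := by
    intro m
    have hvlt : m.val < 2*n+2 := ZMod.val_lt m
    have hm : ((m.val : ℕ) : ZMod (2*n+2)) = m := ZMod.natCast_zmod_val m
    rcases Nat.lt_or_ge m.val 1 with hv | hv
    · refine ⟨Sum.inr (Sum.inr 0), ?_⟩
      simp only [hψ, Sum.elim_inr, if_pos rfl]
      rw [← hm, show m.val = 0 from by omega]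
      norm_num
    · rcases Nat.lt_or_ge m.val (n+1) with hv2 | hv2
      · refine ⟨Sum.inl ⟨m.val - 1, by omega⟩, ?_⟩
        show (((m.val - 1 + 1 : ℕ)) : ZMod (2*n+2)) = m
        rw [show m.val - 1 + 1 = m.val from by omega, hm]
      · rcases Nat.lt_or_ge m.val (n+2) with hv3 | hv3
        · refine ⟨Sum.inr (Sum.inr 1), ?_⟩
          show ((n+1 : ℕ) : ZMod (2*n+2)) = m
          rw [show (n+1:ℕ) = m.val from by omega, hm]
        · refine ⟨Sum.inr (Sum.inl ⟨2*n+1 - m.val, by omega⟩), ?_⟩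
          show -(((2*n+1 - m.val + 1 : ℕ)) : ZMod (2*n+2)) = m
          have hc : ((2*n+1 - m.val + 1 : ℕ) : ZMod (2*n+2)) + ((m.val : ℕ) : ZMod (2*n+2)) = 0 := by
            rw [← Nat.cast_add, show 2*n+1 - m.val + 1 + m.val = 2*n+2 from by omega]
            exact ZMod.natCast_self _
          linear_combination -hc + hm
  have hbij : Function.Bijective ψ := by
    rw [Fintype.bijective_iff_surjective_and_card]
    exact ⟨hsurj, by simp [ZMod.card]; ring⟩
  rw [← Fintype.sum_bijective ψ hbij (fun s => G (ψ s)) G (fun _ => rfl)]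
  rw [Fintype.sum_sum_type, Fintype.sum_sum_type, Fin.sum_univ_two]
  simp only [hψ, Sum.elim_inl, Sum.elim_inr]
  have hf : ((1:Fin 2) = 0) = False := by simp
  simp only [if_true, hf, if_false, hG, h0, hmid]
  ring

lemma sum_shift {n : ℕ} (f : ZMod (2*n+2) → ℝ) (c : ZMod (2*n+2)) :
    ∑ m : ZMod (2*n+2), f (m + c) = ∑ m : ZMod (2*n+2), f m :=
  Fintype.sum_equiv (Equiv.addRight c) _ _ (fun _ => rfl)

/-- elementary symbol: indicator of distance `d`. -/
noncomputable def eSymb (d : ℕ) : ℕ → ℝ := fun k => if k = d then 1 else 0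

lemma tau_e_entry {n d : ℕ} (hd1 : 1 ≤ d) (hdn : d ≤ n - 1) (i j : Fin n) :
    tauMat (eSymb d) n i j =
      ((if aIdx n i - (d : ZMod (2*n+2)) = aIdx n j then (1:ℝ) else 0)
        - (if aIdx n i - (d : ZMod (2*n+2)) = -aIdx n j then 1 else 0))
      + ((if aIdx n i + (d : ZMod (2*n+2)) = aIdx n j then (1:ℝ) else 0)
        - (if aIdx n i + (d : ZMod (2*n+2)) = -aIdx n j then 1 else 0)) := by
  have hi := i.isLt; have hj := j.isLt
  have hn1 : 1 ≤ n := by omega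
  have c1 : (aIdx n i - (d : ZMod (2*n+2)) = aIdx n j) ↔ ((i:ℕ) = (j:ℕ) + d) := by
    rw [sub_eq_iff_eq_add, aIdx, aIdx, ← Nat.cast_add,
      cast_eq_cast_iff (by omega) (by omega)]
    omega
  have c2 : (aIdx n i - (d : ZMod (2*n+2)) = -aIdx n j) ↔ ((i:ℕ) + (j:ℕ) + 2 = d) := by
    have hc : (((i:ℕ)+(j:ℕ)+2 : ℕ) : ZMod (2*n+2)) = aIdx n i + aIdx n j := by
      rw [aIdx, aIdx]; push_cast; ring
    constructor
    · intro h
      have h2 : (((i:ℕ)+(j:ℕ)+2 : ℕ) : ZMod (2*n+2)) = ((d:ℕ) : ZMod (2*n+2)) := by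
        rw [hc]; linear_combination h
      rwa [cast_eq_cast_iff (by omega) (by omega)] at h2
    · intro h
      have h2 : (((i:ℕ)+(j:ℕ)+2 : ℕ) : ZMod (2*n+2)) = ((d:ℕ) : ZMod (2*n+2)) := by rw [h]
      rw [hc] at h2
      linear_combination h2
  have c3 : (aIdx n i + (d : ZMod (2*n+2)) = aIdx n j) ↔ ((j:ℕ) = (i:ℕ) + d) := by
    rw [aIdx, aIdx, ← Nat.cast_add, cast_eq_cast_iff (by omega) (by omega)]
    omega
  have c4 : (aIdx n i + (d : ZMod (2*n+2)) = -aIdx n j) ↔ ((i:ℕ) + (j:ℕ) + 2 + d = 2*n+2) := by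
    rw [aIdx, aIdx, ← Nat.cast_add, cast_eq_neg_cast_iff,
      show (i:ℕ)+1+d+((j:ℕ)+1) = (i:ℕ)+(j:ℕ)+2+d from by ring,
      dvd_window (by omega) (by omega)]
  simp only [c1, c2, c3, c4, tauMat, toeplitzMat, hankelMat, Matrix.sub_apply,
    Matrix.of_apply, eSymb]
  split_ifs <;> first | (exfalso; omega) | (exfalso; assumption) | norm_num

lemma tau_e_mulVec {n d : ℕ} (hd1 : 1 ≤ d) (hdn : d ≤ n - 1) (x : Fin n → ℝ) (i : Fin n) :
    (tauMat (eSymb d) n *ᵥ x) i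
      = extOdd x (aIdx n i - (d : ZMod (2*n+2))) + extOdd x (aIdx n i + (d : ZMod (2*n+2))) := by
  rw [extOdd, extOdd, ← Finset.sum_add_distrib]
  show ∑ j, tauMat (eSymb d) n i j * x j = _
  apply Finset.sum_congr rfl
  intro j _
  rw [tau_e_entry hd1 hdn]
  split_ifs <;> ring

lemma tau_e_qf {n d : ℕ} (hd1 : 1 ≤ d) (hdn : d ≤ n - 1) (x : Fin n → ℝ) :
    x ⬝ᵥ (tauMat (eSymb d) n *ᵥ x)
      = ∑ m : ZMod (2*n+2), extOdd x m * extOdd x (m + (d : ZMod (2*n+2))) := by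
  set D : ZMod (2*n+2) := (d : ZMod (2*n+2)) with hD
  have hqf : x ⬝ᵥ (tauMat (eSymb d) n *ᵥ x)
      = ∑ i : Fin n, (extOdd x (aIdx n i) * (extOdd x (aIdx n i - D) + extOdd x (aIdx n i + D))) := by
    apply Finset.sum_congr rfl
    intro i _
    rw [tau_e_mulVec hd1 hdn, extOdd_apply]
  have hpart : ∑ m : ZMod (2*n+2), extOdd x m * (extOdd x (m - D) + extOdd x (m + D))
      = 2 * ∑ i : Fin n, extOdd x (aIdx n i) * (extOdd x (aIdx n i - D) + extOdd x (aIdx n i + D)) := by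
    apply sum_zmod_eq (fun m => extOdd x m * (extOdd x (m - D) + extOdd x (m + D)))
    · intro m
      rw [show -m - D = -(m + D) from by ring, show -m + D = -(m - D) from by ring,
        extOdd_neg, extOdd_neg, extOdd_neg]
      ring
    · rw [extOdd_zero]; ring
    · rw [extOdd_mid]; ring
  have hshift : ∑ m : ZMod (2*n+2), extOdd x m * extOdd x (m - D)
      = ∑ m : ZMod (2*n+2), extOdd x (m + D) * extOdd x m := by
    rw [← sum_shift (fun m => extOdd x m * extOdd x (m - D)) D]
    apply Finset.sum_congr rfl
    intro m _
    rw [add_sub_cancel_right]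
  have hsplit : ∑ m : ZMod (2*n+2), extOdd x m * (extOdd x (m - D) + extOdd x (m + D))
      = ∑ m : ZMod (2*n+2), extOdd x m * extOdd x (m - D)
        + ∑ m : ZMod (2*n+2), extOdd x m * extOdd x (m + D) := by
    rw [← Finset.sum_add_distrib]
    apply Finset.sum_congr rfl
    intro m _
    ring
  have hcomm : ∑ m : ZMod (2*n+2), extOdd x (m + D) * extOdd x m
      = ∑ m : ZMod (2*n+2), extOdd x m * extOdd x (m + D) := by
    apply Finset.sum_congr rfl
    intro m _
    ring
  rw [hqf]
  linarith [hpart, hshift, hsplit, hcomm]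

lemma tau_e_qf_le {n d : ℕ} (hd1 : 1 ≤ d) (hdn : d ≤ n - 1) (x : Fin n → ℝ) :
    x ⬝ᵥ (tauMat (eSymb d) n *ᵥ x) ≤ 2 * ∑ j, (x j)^2 := by
  rw [tau_e_qf hd1 hdn]
  set D : ZMod (2*n+2) := (d : ZMod (2*n+2)) with hD
  have hsq : ∑ m : ZMod (2*n+2), (extOdd x m)^2 = 2 * ∑ j, (x j)^2 := by
    have h := sum_zmod_eq (fun m => (extOdd x m)^2)
      (fun m => by show extOdd x (-m) ^ 2 = extOdd x m ^ 2; rw [extOdd_neg]; ring)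
      (by show extOdd x 0 ^ 2 = 0; rw [extOdd_zero]; ring)
      (by show extOdd x ((n+1:ℕ) : ZMod (2*n+2)) ^ 2 = 0; rw [extOdd_mid]; ring)
    rw [h]
    congr 1
    apply Finset.sum_congr rfl
    intro j _
    simp only [extOdd_apply]
  have hshift : ∑ m : ZMod (2*n+2), (extOdd x (m + D))^2 = ∑ m : ZMod (2*n+2), (extOdd x m)^2 :=
    sum_shift (fun m => (extOdd x m)^2) D
  have hnn : (0:ℝ) ≤ ∑ m : ZMod (2*n+2), (extOdd x m - extOdd x (m + D))^2 :=
    Finset.sum_nonneg (fun m _ => sq_nonneg _)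
  have hexp : ∑ m : ZMod (2*n+2), (extOdd x m - extOdd x (m + D))^2
      = ∑ m : ZMod (2*n+2), (extOdd x m)^2 + ∑ m : ZMod (2*n+2), (extOdd x (m + D))^2
        - 2 * ∑ m : ZMod (2*n+2), extOdd x m * extOdd x (m + D) := by
    rw [show ∑ m : ZMod (2*n+2), (extOdd x m - extOdd x (m + D))^2
        = ∑ m : ZMod (2*n+2), ((extOdd x m)^2 + (extOdd x (m + D))^2
            - 2 * (extOdd x m * extOdd x (m + D)))
      from Finset.sum_congr rfl (fun m _ => by ring)]
    rw [Finset.sum_sub_distrib, Finset.sum_add_distrib, ← Finset.mul_sum]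
  linarith

lemma tau_e_zero {n : ℕ} : tauMat (eSymb 0) n = 1 := by
  ext i j
  have hi := i.isLt; have hj := j.isLt
  simp only [tauMat, toeplitzMat, hankelMat, Matrix.sub_apply, Matrix.of_apply, eSymb,
    Matrix.one_apply]
  have hab : ((((i:ℤ) - (j:ℤ)).natAbs = 0)) ↔ (i = j) := by
    rw [Fin.ext_iff]; omega
  simp only [hab]
  split_ifs <;> first | (exfalso; omega) | (exfalso; assumption) | norm_num

lemma tau_decomp {n : ℕ} (w : ℕ → ℝ) :
    tauMat w n = ∑ d ∈ Finset.range n, w d • tauMat (eSymb d) n := by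
  ext i j
  have hi := i.isLt; have hj := j.isLt
  rw [Matrix.sum_apply]
  have hb : (((i:ℤ) - (j:ℤ)).natAbs) < n := by omega
  simp only [Matrix.smul_apply, smul_eq_mul, tauMat, Matrix.sub_apply, toeplitzMat,
    hankelMat, Matrix.of_apply, eSymb, mul_sub, mul_ite, mul_one, mul_zero]
  rw [Finset.sum_sub_distrib]
  congr 1
  · rw [Finset.sum_ite_eq (Finset.range n) ((((i:ℤ) - (j:ℤ)).natAbs)) w]
    simp [Finset.mem_range, hb]
  · by_cases h1 : (i:ℕ)+(j:ℕ)+2 ≤ n - 1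
    · simp only [if_pos h1]
      rw [Finset.sum_ite_eq (Finset.range n) ((i:ℕ)+(j:ℕ)+2) w,
        if_pos (Finset.mem_range.mpr (by omega))]
    · by_cases h2 : (i:ℕ)+(j:ℕ)+2 ≤ n + 2
      · simp only [if_neg h1, if_pos h2]
        simp
      · simp only [if_neg h1, if_neg h2]
        rw [Finset.sum_ite_eq (Finset.range n) (2*n+2 - ((i:ℕ)+(j:ℕ)+2)) w,
          if_pos (Finset.mem_range.mpr (by omega))]

lemma qf_sum {n : ℕ} (s : Finset ℕ) (c : ℕ → ℝ) (A : ℕ → Matrix (Fin n) (Fin n) ℝ)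
    (x : Fin n → ℝ) :
    x ⬝ᵥ ((∑ d ∈ s, c d • A d) *ᵥ x) = ∑ d ∈ s, c d * (x ⬝ᵥ (A d *ᵥ x)) := by
  classical
  induction s using Finset.induction with
  | empty => simp
  | insert _ _ h ih =>
    rw [Finset.sum_insert h, Finset.sum_insert h, Matrix.add_mulVec, dotProduct_add, ih,
      Matrix.smul_mulVec, dotProduct_smul, smul_eq_mul]

lemma tau_qf_nonpos {α : ℝ} (h1 : 1 < α) (h2 : α < 2) {n : ℕ} (hn : 1 ≤ n) (x : Fin n → ℝ) :
    x ⬝ᵥ (tauMat (gSymb α) n *ᵥ x) ≤ 0 := by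
  rw [tau_decomp (gSymb α), qf_sum]
  rw [Finset.range_eq_Ico, ← Finset.sum_Ico_consecutive _ (Nat.zero_le 1) hn,
    show Finset.Ico 0 1 = Finset.range 1 from by rw [Finset.range_eq_Ico],
    Finset.sum_range_one]
  have hx2 : x ⬝ᵥ (tauMat (eSymb 0) n *ᵥ x) = ∑ j, (x j)^2 := by
    rw [tau_e_zero, Matrix.one_mulVec]
    simp [dotProduct, sq]
  rw [hx2]
  set Sx := ∑ j, (x j)^2 with hSx
  have hSxnn : 0 ≤ Sx := Finset.sum_nonneg (fun j _ => sq_nonneg _)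
  have hbound : ∑ d ∈ Finset.Ico 1 n, gSymb α d * (x ⬝ᵥ (tauMat (eSymb d) n *ᵥ x))
      ≤ ∑ d ∈ Finset.Ico 1 n, gSymb α d * (2 * Sx) := by
    apply Finset.sum_le_sum
    intro d hd
    rw [Finset.mem_Ico] at hd
    exact mul_le_mul_of_nonneg_left (tau_e_qf_le (by omega) (by omega) x)
      (gSymb_nonneg h1 h2 d (by omega))
  have hsum : ∑ d ∈ Finset.Ico 1 n, gSymb α d * (2 * Sx)
      = (∑ d ∈ Finset.Ico 1 n, gSymb α d) * (2 * Sx) := by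
    rw [Finset.sum_mul]
  have hb := symb_bound h1 h2 n hn
  nlinarith [hb, hSxnn, hbound, hsum]

lemma tau_isHermitian (t : ℕ → ℝ) (n : ℕ) : (tauMat t n).IsHermitian := by
  show _ᴴ = _
  ext i j
  rw [Matrix.conjTranspose_apply, star_trivial]
  simp only [tauMat, toeplitzMat, hankelMat, Matrix.sub_apply, Matrix.of_apply]
  rw [show ((j:ℤ) - (i:ℤ)).natAbs = ((i:ℤ) - (j:ℤ)).natAbs from by omega,
    show (j:ℕ) + (i:ℕ) = (i:ℕ) + (j:ℕ) from by omega]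

lemma tau_neg_psd {α : ℝ} (h1 : 1 < α) (h2 : α < 2) {n : ℕ} (hn : 1 ≤ n) :
    (-(tauMat (gSymb α) n)).PosSemidef := by
  refine Matrix.PosSemidef.of_dotProduct_mulVec_nonneg ?_ ?_
  · exact (tau_isHermitian _ _).neg
  · intro x
    simp only [star_trivial, Matrix.neg_mulVec, dotProduct_neg]
    linarith [tau_qf_nonpos h1 h2 hn x]

lemma psd_blockDiagonal {p o : Type*} [Fintype p] [Fintype o] [DecidableEq p] [DecidableEq o]
    {B : Matrix p p ℝ} (hB : B.PosSemidef) :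
    (Matrix.blockDiagonal (fun _ : o => B)).PosSemidef := by
  refine Matrix.PosSemidef.of_dotProduct_mulVec_nonneg ?_ ?_
  · rw [Matrix.IsHermitian, Matrix.blockDiagonal_conjTranspose]
    rw [show (fun _ : o => Bᴴ) = (fun _ : o => B) from funext (fun _ => hB.1)]
  · intro x
    have key : star x ⬝ᵥ (Matrix.blockDiagonal (fun _ : o => B) *ᵥ x)
        = ∑ k : o, ((fun i => x (i, k)) ⬝ᵥ (B *ᵥ (fun i => x (i, k)))) := by
      simp only [star_trivial, dotProduct, Matrix.mulVec, Matrix.blockDiagonal_apply,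
        Fintype.sum_prod_type, ite_mul, zero_mul, Finset.sum_ite_eq, Finset.mem_univ, if_true]
      rw [Finset.sum_comm]
    rw [key]
    exact Finset.sum_nonneg fun k _ => by simpa using hB.dotProduct_mulVec_nonneg (fun i => x (i, k))

lemma kron_one_eq {p o : Type*} [Fintype p] [Fintype o] [DecidableEq o] (B : Matrix p p ℝ) :
    B ⊗ₖ (1 : Matrix o o ℝ) = Matrix.blockDiagonal (fun _ : o => B) := by
  ext ⟨k, i⟩ ⟨l, j⟩
  simp [Matrix.kroneckerMap_apply, Matrix.blockDiagonal_apply, Matrix.one_apply, mul_ite]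

lemma one_kron_eq {p o : Type*} [Fintype p] [Fintype o] [DecidableEq o] (B : Matrix p p ℝ) :
    (1 : Matrix o o ℝ) ⊗ₖ B
      = (Matrix.blockDiagonal (fun _ : o => B)).submatrix Prod.swap Prod.swap := by
  ext ⟨k, i⟩ ⟨l, j⟩
  simp [Matrix.kroneckerMap_apply, Matrix.blockDiagonal_apply, Matrix.one_apply,
    Matrix.submatrix_apply, Prod.swap, ite_mul, zero_mul, one_mul]

lemma psd_smul {p : Type*} [Fintype p] {c : ℝ} (hc : 0 ≤ c) {M : Matrix p p ℝ}
    (hM : M.PosSemidef) : (c • M).PosSemidef := by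
  refine Matrix.PosSemidef.of_dotProduct_mulVec_nonneg ?_ ?_
  · rw [Matrix.IsHermitian, Matrix.conjTranspose_smul, star_trivial, hM.1]
  · intro x
    rw [Matrix.smul_mulVec, dotProduct_smul, smul_eq_mul]
    exact mul_nonneg hc (hM.dotProduct_mulVec_nonneg x)

lemma one_kron_neg {p o : Type*} [Fintype p] [Fintype o] [DecidableEq o] (B : Matrix p p ℝ) :
    (1 : Matrix o o ℝ) ⊗ₖ (-B) = -((1 : Matrix o o ℝ) ⊗ₖ B) := by
  ext ⟨k, i⟩ ⟨l, j⟩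
  simp [Matrix.kroneckerMap_apply]

lemma neg_kron_one {p o : Type*} [Fintype p] [Fintype o] [DecidableEq o] (B : Matrix p p ℝ) :
    (-B) ⊗ₖ (1 : Matrix o o ℝ) = -(B ⊗ₖ (1 : Matrix o o ℝ)) := by
  ext ⟨k, i⟩ ⟨l, j⟩
  simp [Matrix.kroneckerMap_apply]

theorem stmt14 (α₁ α₂ : ℝ) (hα₁ : 1 < α₁ ∧ α₁ < 2) (hα₂ : 1 < α₂ ∧ α₂ < 2)
    (n₁ n₂ : ℕ) (hn₁ : 1 ≤ n₁) (hn₂ : 1 ≤ n₂) (cx cy : ℝ) (hcx : 0 < cx) (hcy : 0 < cy)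
    (d : Fin n₂ × Fin n₁ → ℝ) (hd : ∀ i, 0 ≤ d i)
    (P : Matrix (Fin n₂ × Fin n₁) (Fin n₂ × Fin n₁) ℝ)
    (hP : P = 1 - tau1A α₁ α₂ n₁ n₂ cx cy + Matrix.diagonal d) :
    P.PosDef ∧ IsUnit P := by
  have hpsd1 : ((1 : Matrix (Fin n₂) (Fin n₂) ℝ) ⊗ₖ (-(tauMat (gSymb α₁) n₁))).PosSemidef := by
    rw [one_kron_eq]
    exact Matrix.PosSemidef.submatrix (psd_blockDiagonal (tau_neg_psd hα₁.1 hα₁.2 hn₁)) Prod.swap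
  have hpsd2 : ((-(tauMat (gSymb α₂) n₂)) ⊗ₖ (1 : Matrix (Fin n₁) (Fin n₁) ℝ)).PosSemidef := by
    rw [kron_one_eq]
    exact psd_blockDiagonal (tau_neg_psd hα₂.1 hα₂.2 hn₂)
  have hMeq : -(tau1A α₁ α₂ n₁ n₂ cx cy)
      = cx • ((1 : Matrix (Fin n₂) (Fin n₂) ℝ) ⊗ₖ (-(tauMat (gSymb α₁) n₁)))
        + cy • ((-(tauMat (gSymb α₂) n₂)) ⊗ₖ (1 : Matrix (Fin n₁) (Fin n₁) ℝ)) := by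
    rw [tau1A, one_kron_neg, neg_kron_one, smul_neg, smul_neg]
    abel
  have hpsd : (-(tau1A α₁ α₂ n₁ n₂ cx cy) + Matrix.diagonal d).PosSemidef := by
    rw [hMeq]
    exact ((psd_smul hcx.le hpsd1).add (psd_smul hcy.le hpsd2)).add
      (Matrix.PosSemidef.diagonal hd)
  have hPeq : P = 1 + (-(tau1A α₁ α₂ n₁ n₂ cx cy) + Matrix.diagonal d) := by
    rw [hP]; abel
  have hPD : P.PosDef := by
    rw [hPeq]
    exact Matrix.PosDef.add_posSemidef Matrix.PosDef.one hpsd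
  exact ⟨hPD, hPD.isUnit⟩
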